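/- Let µ, h > 0 with µh > 1. Then the equation y = µh·tanh(y) has a unique positive solution y*. Moreover, for real α with α̂ := α + µ²/2 > 0, the inequality 2α·cosh²(√(2α̂)h) + µ² > 0 holds if and only if α > −µ²/2 + y*²/(2h²). -/

import Mathlib

open Real

private lemma gmono : StrictMonoOn (fun y => y * Real.cosh y / Real.sinh y) (Set.Ioi 0) := by
  apply strictMonoOn_of_deriv_pos (convex_Ioi 0)
  · apply ContinuousOn.div
    · fun_prop
    · fun_prop
    · intro x hx
      exact ne_of_gt (Real.sinh_pos_iff.mpr hx)
  · intro x hx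
    rw [interior_Ioi] at hx
    have hx' : (0:ℝ) < x := hx
    have hs : 0 < Real.sinh x := Real.sinh_pos_iff.mpr hx'
    have hd : HasDerivAt (fun y => y * Real.cosh y / Real.sinh y)
        ((((1 : ℝ) * Real.cosh x + x * Real.sinh x) * Real.sinh x -
          x * Real.cosh x * Real.cosh x) / Real.sinh x ^ 2) x :=
      ((hasDerivAt_id x).mul (Real.hasDerivAt_cosh x)).div (Real.hasDerivAt_sinh x) hs.ne'
    rw [hd.deriv]
    apply div_pos _ (by positivity)
    have h1 : x < Real.sinh x * Real.cosh x := by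
      have := Real.self_lt_sinh_iff.mpr (by linarith : (0:ℝ) < 2 * x)
      rw [Real.sinh_two_mul] at this
      linarith
    have h2 : Real.cosh x ^ 2 = Real.sinh x ^ 2 + 1 := Real.cosh_sq x
    nlinarith

private lemma fixed_iff (μ h y : ℝ) (hy : 0 < y) :
    y = μ * h * Real.tanh y ↔ y * Real.cosh y / Real.sinh y = μ * h := by
  have hs : 0 < Real.sinh y := Real.sinh_pos_iff.mpr hy
  have hc : 0 < Real.cosh y := Real.cosh_pos y
  rw [Real.tanh_eq_sinh_div_cosh]
  constructor
  · intro hyy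
    field_simp
    field_simp at hyy
    linarith
  · intro hyy
    field_simp
    field_simp at hyy
    linarith

theorem stmt_5 (μ h : ℝ) (hμ : 0 < μ) (hh : 0 < h) (hμh : 1 < μ * h) :
    (∃! y : ℝ, 0 < y ∧ y = μ * h * Real.tanh y) ∧
    ∀ ystar : ℝ, (0 < ystar ∧ ystar = μ * h * Real.tanh ystar) →
      ∀ α : ℝ, α + μ ^ 2 / 2 > 0 →
        (2 * α * Real.cosh (Real.sqrt (2 * (α + μ ^ 2 / 2)) * h) ^ 2 + μ ^ 2 > 0 ↔
          α > -μ ^ 2 / 2 + ystar ^ 2 / (2 * h ^ 2)) := by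
  set G : ℝ → ℝ := fun y => y * Real.cosh y / Real.sinh y with hG
  constructor
  · -- existence and uniqueness
    -- find y0 > 0 with G y0 < μ h
    have hder : HasDerivAt Real.tanh 1 0 := by
      have : HasDerivAt (fun x => Real.sinh x / Real.cosh x)
          ((Real.cosh 0 * Real.cosh 0 - Real.sinh 0 * Real.sinh 0) / Real.cosh 0 ^ 2) 0 :=
        (Real.hasDerivAt_sinh 0).div (Real.hasDerivAt_cosh 0) (Real.cosh_pos 0).ne'
      simp only [Real.sinh_zero, Real.cosh_zero] at this
      norm_num at this
      exact this.congr_of_eventuallyEq (by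
        filter_upwards with x
        rw [Real.tanh_eq_sinh_div_cosh])
    have hslope := hasDerivAt_iff_tendsto_slope.mp hder
    have hsub : Filter.Tendsto (slope Real.tanh 0) (nhdsWithin 0 (Set.Ioi 0)) (nhds 1) :=
      hslope.mono_left (nhdsWithin_mono 0 (by intro x hx; exact ne_of_gt hx))
    have hev : ∀ᶠ y in nhdsWithin 0 (Set.Ioi 0),
        1 / (μ * h) < slope Real.tanh 0 y :=
      hsub.eventually (eventually_gt_nhds (by
        rw [div_lt_one (by linarith)]; linarith))
    obtain ⟨y0, hy0s, hy0⟩ := (hev.and self_mem_nhdsWithin).exists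
    have hy0pos : 0 < y0 := hy0
    have hy0slope : slope Real.tanh 0 y0 = Real.tanh y0 / y0 := by
      simp [slope, Real.tanh_zero, div_eq_inv_mul, mul_comm]
    have htanhy0 : 0 < Real.tanh y0 := by
      rw [Real.tanh_eq_sinh_div_cosh]
      exact div_pos (Real.sinh_pos_iff.mpr hy0pos) (Real.cosh_pos y0)
    have hGy0 : G y0 < μ * h := by
      have h1 : 1 / (μ * h) < Real.tanh y0 / y0 := by rwa [hy0slope] at hy0s
      have : y0 / Real.tanh y0 < μ * h := by
        rw [div_lt_iff₀ htanhy0]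
        rw [div_lt_div_iff₀ (by linarith) hy0pos] at h1
        nlinarith
      have heq : G y0 = y0 / Real.tanh y0 := by
        rw [hG]; simp only; rw [Real.tanh_eq_sinh_div_cosh]
        field_simp
      rwa [heq]
    -- a big point
    set Y : ℝ := y0 + μ * h with hY
    have hYpos : 0 < Y := by positivity
    have hYgt : μ * h < G Y := by
      have hsY : 0 < Real.sinh Y := Real.sinh_pos_iff.mpr hYpos
      have hcY : Real.sinh Y < Real.cosh Y := by
        have := Real.cosh_sub_sinh Y
        nlinarith [Real.exp_pos (-Y)]
      have : Y < G Y := by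
        rw [hG]; simp only
        rw [lt_div_iff₀ hsY]
        nlinarith
      have : μ * h < G Y := by
        have : μ * h < Y := by linarith [hy0pos]
        linarith
      exact this
    have hy0Y : y0 ≤ Y := by nlinarith
    have hcont : ContinuousOn G (Set.Icc y0 Y) := by
      apply ContinuousOn.div
      · fun_prop
      · fun_prop
      · intro x hx
        exact ne_of_gt (Real.sinh_pos_iff.mpr (lt_of_lt_of_le hy0pos hx.1))
    have := intermediate_value_Icc hy0Y hcont
    have hmem : μ * h ∈ Set.Icc (G y0) (G Y) := ⟨le_of_lt hGy0, le_of_lt hYgt⟩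
    obtain ⟨c, hc, hGc⟩ := this hmem
    have hcpos : 0 < c := lt_of_lt_of_le hy0pos hc.1
    refine ⟨c, ⟨hcpos, (fixed_iff μ h c hcpos).mpr hGc⟩, ?_⟩
    rintro z ⟨hzpos, hz⟩
    have hGz : G z = μ * h := (fixed_iff μ h z hzpos).mp hz
    exact gmono.injOn (Set.mem_Ioi.mpr hzpos) (Set.mem_Ioi.mpr hcpos) (hGz.trans hGc.symm)
  · rintro ystar ⟨hyst, hystf⟩ α hα
    have hGyst : G ystar = μ * h := (fixed_iff μ h ystar hyst).mp hystf
    set s : ℝ := Real.sqrt (2 * (α + μ ^ 2 / 2)) with hs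
    have hspos : 0 < s := Real.sqrt_pos.mpr (by linarith)
    have hssq : s ^ 2 = 2 * α + μ ^ 2 := by
      rw [hs, sq_sqrt (by linarith)]; ring
    set b : ℝ := s * h with hb
    have hbpos : 0 < b := by positivity
    have hsb : 0 < Real.sinh b := Real.sinh_pos_iff.mpr hbpos
    have hcb : 0 < Real.cosh b := Real.cosh_pos b
    have step1 : 2 * α * Real.cosh b ^ 2 + μ ^ 2 > 0 ↔
        μ * Real.sinh b < s * Real.cosh b := by
      have hcs : Real.cosh b ^ 2 = Real.sinh b ^ 2 + 1 := Real.cosh_sq b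
      rw [show μ * Real.sinh b < s * Real.cosh b ↔
          (μ * Real.sinh b) ^ 2 < (s * Real.cosh b) ^ 2 from
        (pow_lt_pow_iff_left₀ (by positivity) (by positivity) two_ne_zero).symm]
      constructor
      · intro hlt; nlinarith
      · intro hlt; nlinarith
    have step2 : μ * Real.sinh b < s * Real.cosh b ↔ μ * h < G b := by
      rw [hG]; simp only
      rw [lt_div_iff₀ hsb, hb]
      constructor
      · intro h1; nlinarith
      · intro h1; nlinarith
    have step3 : μ * h < G b ↔ ystar < b := by
      rw [← hGyst]
      exact gmono.lt_iff_lt (Set.mem_Ioi.mpr hyst) (Set.mem_Ioi.mpr hbpos)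
    have step4 : ystar < b ↔ α > -μ ^ 2 / 2 + ystar ^ 2 / (2 * h ^ 2) := by
      rw [show ystar < b ↔ ystar ^ 2 < b ^ 2 from
        (pow_lt_pow_iff_left₀ (le_of_lt hyst) (le_of_lt hbpos) two_ne_zero).symm]
      have hbsq : b ^ 2 = (2 * α + μ ^ 2) * h ^ 2 := by
        rw [hb, mul_pow, hssq]
      rw [hbsq]
      rw [gt_iff_lt]
      constructor
      · intro h1
        have h2 : ystar ^ 2 / (2 * h ^ 2) < α + μ ^ 2 / 2 :=
          (div_lt_iff₀ (by positivity)).mpr (by nlinarith)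
        linarith
      · intro h1
        have h2 : ystar ^ 2 < (α + μ ^ 2 / 2) * (2 * h ^ 2) :=
          (div_lt_iff₀ (by positivity)).mp (by linarith)
        nlinarith
    rw [step1, step2, step3, step4]
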